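/- arXiv:1206.3916 — 6 statements merged into one kernel-verified Lean document; each statement's English description precedes it below -/
import Mathlib

section
/- Let S be a set and ◁ a binary operation on S. Define σ : S × S → S × S by σ(a,b) = (b, a◁b). Then σ is a bijection of S × S satisfying the set-theoretic Yang–Baxter equation if and only if (S,◁) is a rack, i.e. ◁ is self-distributive ((a◁b)◁c = (a◁c)◁(b◁c) for all a,b,c) and for every b ∈ S the right translation a ↦ a◁b is a bijection of S. -/
/-- For `σ (a,b) = (b, a ◁ b)` on `S × S`, `σ` is a bijection of `S × S`
satisfying the set-theoretic Yang–Baxter equation iff `(S, ◁)` is a rack, i.e. `◁` is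
self-distributive and every right translation `a ↦ a ◁ b` is a bijection of `S`. -/
theorem stmt1 {S : Type*} (op : S → S → S) :
    (let σ : S × S → S × S := fun p => (p.2, op p.1 p.2)
     let σ₁ : S × S × S → S × S × S := fun p => ((σ (p.1, p.2.1)).1, (σ (p.1, p.2.1)).2, p.2.2)
     let σ₂ : S × S × S → S × S × S := fun p => (p.1, σ p.2)
     Function.Bijective σ ∧ σ₁ ∘ σ₂ ∘ σ₁ = σ₂ ∘ σ₁ ∘ σ₂) ↔
    ((∀ a b c : S, op (op a b) c = op (op a c) (op b c)) ∧
      ∀ b : S, Function.Bijective (fun a => op a b)) := by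
  simp only
  constructor
  · rintro ⟨⟨hinj, hsurj⟩, hyb⟩
    constructor
    · intro a b c
      have h := congrFun hyb (a, b, c)
      simp only [Function.comp_apply] at h
      exact (congrArg (fun p : S × S × S => p.2.2) h)
    · intro b
      constructor
      · intro a a' h
        have : ((a, b) : S × S) = (a', b) := hinj (by simp [h])
        exact (Prod.mk.injEq _ _ _ _ ▸ this).1
      · intro y
        obtain ⟨⟨a, b'⟩, h⟩ := hsurj (b, y)
        simp only [Prod.mk.injEq] at h
        exact ⟨a, by rw [← h.1]; exact h.2⟩
  · rintro ⟨hsd, hb⟩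
    refine ⟨⟨?_, ?_⟩, ?_⟩
    · rintro ⟨a, b⟩ ⟨a', b'⟩ h
      simp only [Prod.mk.injEq] at h
      obtain ⟨rfl, h2⟩ := h
      exact Prod.ext ((hb b).1 h2) rfl
    · rintro ⟨x, y⟩
      obtain ⟨a, ha⟩ := (hb x).2 y
      exact ⟨(a, x), by simp [ha]⟩
    · funext ⟨a, b, c⟩
      exact Prod.ext rfl (Prod.ext rfl (hsd a b c))
end

section
/- Let (S,◁,◁̃) be a rack and f : S → S a bijection with f(a◁b) = f(a)◁f(b) for all a,b ∈ S (a virtual rack), and let n ≥ 2. Define for 1 ≤ i ≤ n−1 the bijections of S^n: T_i(a_1,…,a_n) = (a_1,…,a_{i−1}, a_{i+1}, a_i◁a_{i+1}, a_{i+2},…,a_n) and Z_i^f(a_1,…,a_n) = (a_1,…,a_{i−1}, f^{−1}(a_{i+1}), f(a_i), a_{i+2},…,a_n). Then the assignments σ_i ↦ T_i and ζ_i ↦ Z_i^f define a group homomorphism from the virtual braid group VB_n to the group of permutations of S^n. -/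
set_option maxHeartbeats 1000000

section Loc
variable {S : Type*} {m : ℕ}

/-- A "local" map acting on coordinates `i, i+1`. -/
def loc2 (p q : S → S → S) (i : Fin m) (a : Fin (m + 1) → S) : Fin (m + 1) → S :=
  Function.update (Function.update a i.castSucc (p (a i.castSucc) (a i.succ))) i.succ
    (q (a i.castSucc) (a i.succ))

lemma loc2_apply (p q : S → S → S) (i : Fin m) (a : Fin (m + 1) → S) (k : Fin (m + 1)) :
    loc2 p q i a k =
      if k = i.succ then q (a i.castSucc) (a i.succ)
      else if k = i.castSucc then p (a i.castSucc) (a i.succ) else a k := by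
  simp [loc2, Function.update_apply]

lemma loc2_comm (p q p' q' : S → S → S) (i j : Fin m)
    (hij : (i : ℕ) + 2 ≤ (j : ℕ) ∨ (j : ℕ) + 2 ≤ (i : ℕ)) (a : Fin (m + 1) → S) :
    loc2 p q i (loc2 p' q' j a) = loc2 p' q' j (loc2 p q i a) := by
  have e1 : loc2 p' q' j a i.castSucc = a i.castSucc := by
    rw [loc2_apply, if_neg (by simp [Fin.ext_iff]; omega), if_neg (by simp [Fin.ext_iff]; omega)]
  have e2 : loc2 p' q' j a i.succ = a i.succ := by
    rw [loc2_apply, if_neg (by simp [Fin.ext_iff]; omega), if_neg (by simp [Fin.ext_iff]; omega)]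
  have e3 : loc2 p q i a j.castSucc = a j.castSucc := by
    rw [loc2_apply, if_neg (by simp [Fin.ext_iff]; omega), if_neg (by simp [Fin.ext_iff]; omega)]
  have e4 : loc2 p q i a j.succ = a j.succ := by
    rw [loc2_apply, if_neg (by simp [Fin.ext_iff]; omega), if_neg (by simp [Fin.ext_iff]; omega)]
  funext k
  simp only [loc2_apply, e1, e2, e3, e4]
  split_ifs <;>
    first
    | rfl
    | (exfalso; simp only [Fin.ext_iff, Fin.val_succ, Fin.coe_castSucc] at *; omega)

end Loc

section Equivs
variable {S : Type*} {m : ℕ}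

/-- `T_i` as an equivalence. -/
def braidEquiv (op inv : S → S → S) (hinv : ∀ a b : S, inv (op a b) b = a ∧ op (inv a b) b = a)
    (i : Fin m) : Equiv.Perm (Fin (m + 1) → S) where
  toFun := loc2 (fun _ y => y) op i
  invFun := loc2 (fun u v => inv v u) (fun u _ => u) i
  left_inv a := by
    have n1 : i.castSucc ≠ i.succ := by simp [Fin.ext_iff]
    have n4 : i.succ ≠ i.castSucc := n1.symm
    funext k
    simp only [loc2_apply, if_neg n1, if_neg n4, if_pos rfl]
    split_ifs <;> subst_vars <;> first | rfl | (exact (hinv _ _).1) | (exact (hinv _ _).2)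
  right_inv a := by
    have n1 : i.castSucc ≠ i.succ := by simp [Fin.ext_iff]
    have n4 : i.succ ≠ i.castSucc := n1.symm
    funext k
    simp only [loc2_apply, if_neg n1, if_neg n4, if_pos rfl]
    split_ifs <;> subst_vars <;> first | rfl | (exact (hinv _ _).1) | (exact (hinv _ _).2)

/-- `Z_i^f` as an equivalence (it is an involution). -/
def vswapEquiv (f : S ≃ S) (i : Fin m) : Equiv.Perm (Fin (m + 1) → S) where
  toFun := loc2 (fun _ y => f.symm y) (fun x _ => f x) i
  invFun := loc2 (fun _ y => f.symm y) (fun x _ => f x) i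
  left_inv a := by
    have n1 : i.castSucc ≠ i.succ := by simp [Fin.ext_iff]
    have n4 : i.succ ≠ i.castSucc := n1.symm
    funext k
    simp only [loc2_apply, if_neg n1, if_neg n4, if_pos rfl]
    split_ifs <;>
      subst_vars <;> first | rfl | (exact f.apply_symm_apply _) | (exact f.symm_apply_apply _)
  right_inv a := by
    have n1 : i.castSucc ≠ i.succ := by simp [Fin.ext_iff]
    have n4 : i.succ ≠ i.castSucc := n1.symm
    funext k
    simp only [loc2_apply, if_neg n1, if_neg n4, if_pos rfl]
    split_ifs <;>
      subst_vars <;> first | rfl | (exact f.apply_symm_apply _) | (exact f.symm_apply_apply _)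

/-- Braid relation. -/
lemma braid_adj (op : S → S → S) (hsd : ∀ a b c : S, op (op a b) c = op (op a c) (op b c))
    (i j : Fin m) (hij : (i : ℕ) + 1 = (j : ℕ)) (a : Fin (m + 1) → S) :
    loc2 (fun _ y => y) op i (loc2 (fun _ y => y) op j (loc2 (fun _ y => y) op i a)) =
    loc2 (fun _ y => y) op j (loc2 (fun _ y => y) op i (loc2 (fun _ y => y) op j a)) := by
  have hji : j.castSucc = i.succ := by simp [Fin.ext_iff]; omega
  have n1 : i.castSucc ≠ i.succ := by simp [Fin.ext_iff]
  have n2 : j.succ ≠ i.succ := by simp [Fin.ext_iff]; omega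
  have n3 : j.succ ≠ i.castSucc := by simp [Fin.ext_iff]; omega
  have n4 : i.succ ≠ i.castSucc := n1.symm
  have n5 : i.castSucc ≠ j.succ := n3.symm
  have n6 : i.succ ≠ j.succ := n2.symm
  funext k
  simp only [loc2_apply, hji, if_neg n1, if_neg n2, if_neg n3, if_neg n4, if_neg n5, if_neg n6,
    if_pos rfl]
  split_ifs <;>
    first
    | rfl
    | (exact hsd _ _ _)
    | (exact (hsd _ _ _).symm)
    | (exfalso; simp only [Fin.ext_iff, Fin.val_succ, Fin.coe_castSucc] at *; omega)

/-- Virtual braid relation for `ζ`. -/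
lemma vswap_adj (f : S ≃ S) (i j : Fin m) (hij : (i : ℕ) + 1 = (j : ℕ)) (a : Fin (m + 1) → S) :
    loc2 (fun _ y => f.symm y) (fun x _ => f x) i
      (loc2 (fun _ y => f.symm y) (fun x _ => f x) j
        (loc2 (fun _ y => f.symm y) (fun x _ => f x) i a)) =
    loc2 (fun _ y => f.symm y) (fun x _ => f x) j
      (loc2 (fun _ y => f.symm y) (fun x _ => f x) i
        (loc2 (fun _ y => f.symm y) (fun x _ => f x) j a)) := by
  have hji : j.castSucc = i.succ := by simp [Fin.ext_iff]; omega
  have n1 : i.castSucc ≠ i.succ := by simp [Fin.ext_iff]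
  have n2 : j.succ ≠ i.succ := by simp [Fin.ext_iff]; omega
  have n3 : j.succ ≠ i.castSucc := by simp [Fin.ext_iff]; omega
  have n4 : i.succ ≠ i.castSucc := n1.symm
  have n5 : i.castSucc ≠ j.succ := n3.symm
  have n6 : i.succ ≠ j.succ := n2.symm
  funext k
  simp only [loc2_apply, hji, if_neg n1, if_neg n2, if_neg n3, if_neg n4, if_neg n5, if_neg n6,
    if_pos rfl]
  split_ifs <;>
    first
    | rfl
    | (simp only [Equiv.symm_apply_apply, Equiv.apply_symm_apply]; done)
    | (exfalso; simp only [Fin.ext_iff, Fin.val_succ, Fin.coe_castSucc] at *; omega)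

/-- Mixed virtual relation `ζ_i ζ_j σ_i = σ_j ζ_i ζ_j`. -/
lemma mixed_adj (op : S → S → S) (f : S ≃ S) (hf : ∀ a b : S, f (op a b) = op (f a) (f b))
    (i j : Fin m) (hij : (i : ℕ) + 1 = (j : ℕ)) (a : Fin (m + 1) → S) :
    loc2 (fun _ y => f.symm y) (fun x _ => f x) i
      (loc2 (fun _ y => f.symm y) (fun x _ => f x) j
        (loc2 (fun _ y => y) op i a)) =
    loc2 (fun _ y => y) op j
      (loc2 (fun _ y => f.symm y) (fun x _ => f x) i
        (loc2 (fun _ y => f.symm y) (fun x _ => f x) j a)) := by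
  have hji : j.castSucc = i.succ := by simp [Fin.ext_iff]; omega
  have n1 : i.castSucc ≠ i.succ := by simp [Fin.ext_iff]
  have n2 : j.succ ≠ i.succ := by simp [Fin.ext_iff]; omega
  have n3 : j.succ ≠ i.castSucc := by simp [Fin.ext_iff]; omega
  have n4 : i.succ ≠ i.castSucc := n1.symm
  have n5 : i.castSucc ≠ j.succ := n3.symm
  have n6 : i.succ ≠ j.succ := n2.symm
  funext k
  simp only [loc2_apply, hji, if_neg n1, if_neg n2, if_neg n3, if_neg n4, if_neg n5, if_neg n6,
    if_pos rfl]
  split_ifs <;>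
    first
    | rfl
    | (simp only [hf, Equiv.symm_apply_apply, Equiv.apply_symm_apply]; done)
    | (exfalso; simp only [Fin.ext_iff, Fin.val_succ, Fin.coe_castSucc] at *; omega)

end Equivs



/-- `T_i(a) = (…, a_{i+1}, a_i ◁ a_{i+1}, …)` on `S^{m+1}`. -/
def braidMap {S : Type*} (op : S → S → S) {m : ℕ} (i : Fin m) (a : Fin (m + 1) → S) :
    Fin (m + 1) → S :=
  Function.update (Function.update a i.castSucc (a i.succ)) i.succ
    (op (a i.castSucc) (a i.succ))

/-- `Z_i^f(a) = (…, f⁻¹(a_{i+1}), f(a_i), …)` on `S^{m+1}`. -/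
def vswapMap {S : Type*} (f : S ≃ S) {m : ℕ} (i : Fin m) (a : Fin (m + 1) → S) :
    Fin (m + 1) → S :=
  Function.update (Function.update a i.castSucc (f.symm (a i.succ))) i.succ (f (a i.castSucc))

/-- The defining relations of the virtual braid group `VB_{m+1}` on generators
`σ_i = Sum.inl i` and `ζ_i = Sum.inr i`, `i : Fin m`. -/
def vbGroupRels (m : ℕ) : Set (FreeGroup (Fin m ⊕ Fin m)) :=
  let σ : Fin m → FreeGroup (Fin m ⊕ Fin m) := fun i => FreeGroup.of (Sum.inl i)
  let ζ : Fin m → FreeGroup (Fin m ⊕ Fin m) := fun i => FreeGroup.of (Sum.inr i)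
  { r | (∃ i j : Fin m, (i : ℕ) + 2 ≤ (j : ℕ) ∧ r = σ i * σ j * (σ i)⁻¹ * (σ j)⁻¹) ∨
        (∃ i j : Fin m, (i : ℕ) + 2 ≤ (j : ℕ) ∧ r = ζ i * ζ j * (ζ i)⁻¹ * (ζ j)⁻¹) ∨
        (∃ i j : Fin m, ((i : ℕ) + 2 ≤ (j : ℕ) ∨ (j : ℕ) + 2 ≤ (i : ℕ)) ∧
          r = σ i * ζ j * (σ i)⁻¹ * (ζ j)⁻¹) ∨
        (∃ i j : Fin m, (i : ℕ) + 1 = (j : ℕ) ∧ r = σ i * σ j * σ i * (σ j * σ i * σ j)⁻¹) ∨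
        (∃ i j : Fin m, (i : ℕ) + 1 = (j : ℕ) ∧ r = ζ i * ζ j * ζ i * (ζ j * ζ i * ζ j)⁻¹) ∨
        (∃ i j : Fin m, (i : ℕ) + 1 = (j : ℕ) ∧ r = ζ i * ζ j * σ i * (σ j * ζ i * ζ j)⁻¹) ∨
        (∃ i : Fin m, r = ζ i * ζ i) }

/-- For a virtual rack `(S, ◁, ◁̃, f)` and `n = m+1 ≥ 2` strands,
`σ_i ↦ T_i`, `ζ_i ↦ Z_i^f` defines a group homomorphism `VB_n → Perm(S^n)`. -/
theorem stmt5 {S : Type*} (op inv : S → S → S)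
    (hsd : ∀ a b c : S, op (op a b) c = op (op a c) (op b c))
    (hinv : ∀ a b : S, inv (op a b) b = a ∧ op (inv a b) b = a)
    (f : S ≃ S) (hf : ∀ a b : S, f (op a b) = op (f a) (f b))
    {m : ℕ} (hm : 1 ≤ m) :
    ∃ ρ : PresentedGroup (vbGroupRels m) →* Equiv.Perm (Fin (m + 1) → S),
      ∀ i : Fin m,
        ⇑(ρ (PresentedGroup.of (rels := vbGroupRels m) (Sum.inl i))) = braidMap op i ∧
        ⇑(ρ (PresentedGroup.of (rels := vbGroupRels m) (Sum.inr i))) = vswapMap f i := by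
  classical
  set B : Fin m → Equiv.Perm (Fin (m + 1) → S) := braidEquiv op inv hinv with hB
  set Z : Fin m → Equiv.Perm (Fin (m + 1) → S) := vswapEquiv f with hZ
  set F : Fin m ⊕ Fin m → Equiv.Perm (Fin (m + 1) → S) := Sum.elim B Z with hF
  have key : ∀ r ∈ vbGroupRels m, FreeGroup.lift F r = 1 := by
    intro r hr
    simp only [vbGroupRels, Set.mem_setOf_eq] at hr
    rcases hr with ⟨i, j, h, rfl⟩ | ⟨i, j, h, rfl⟩ | ⟨i, j, h, rfl⟩ | ⟨i, j, h, rfl⟩ |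
      ⟨i, j, h, rfl⟩ | ⟨i, j, h, rfl⟩ | ⟨i, rfl⟩
    · have hc : B i * B j = B j * B i :=
        Equiv.ext fun a =>
          loc2_comm (fun _ y => y) op (fun _ y => y) op i j (Or.inl h) a
      simp only [map_mul, map_inv, FreeGroup.lift_apply_of, hF, Sum.elim_inl]
      rw [hc]; group
    · have hc : Z i * Z j = Z j * Z i :=
        Equiv.ext fun a =>
          loc2_comm (fun _ y => f.symm y) (fun x _ => f x) (fun _ y => f.symm y)
            (fun x _ => f x) i j (Or.inl h) a
      simp only [map_mul, map_inv, FreeGroup.lift_apply_of, hF, Sum.elim_inr]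
      rw [hc]; group
    · have hc : B i * Z j = Z j * B i :=
        Equiv.ext fun a =>
          loc2_comm (fun _ y => y) op (fun _ y => f.symm y) (fun x _ => f x) i j h a
      simp only [map_mul, map_inv, FreeGroup.lift_apply_of, hF, Sum.elim_inl, Sum.elim_inr]
      rw [hc]; group
    · have hc : B i * B j * B i = B j * B i * B j :=
        Equiv.ext fun a => braid_adj op hsd i j h a
      simp only [map_mul, map_inv, FreeGroup.lift_apply_of, hF, Sum.elim_inl]
      rw [hc]; group
    · have hc : Z i * Z j * Z i = Z j * Z i * Z j :=
        Equiv.ext fun a => vswap_adj f i j h a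
      simp only [map_mul, map_inv, FreeGroup.lift_apply_of, hF, Sum.elim_inr]
      rw [hc]; group
    · have hc : Z i * Z j * B i = B j * Z i * Z j :=
        Equiv.ext fun a => mixed_adj op f hf i j h a
      simp only [map_mul, map_inv, FreeGroup.lift_apply_of, hF, Sum.elim_inl, Sum.elim_inr]
      rw [hc]; group
    · have hc : Z i * Z i = 1 :=
        Equiv.ext fun a => (vswapEquiv f i).left_inv a
      simp only [map_mul, FreeGroup.lift_apply_of, hF, Sum.elim_inr]
      exact hc
  refine ⟨PresentedGroup.toGroup key, fun i => ⟨?_, ?_⟩⟩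
  · rw [PresentedGroup.toGroup.of]; rfl
  · rw [PresentedGroup.toGroup.of]; rfl
end

section
/- Let (S,◁) be a shelf and f : S → S a bijection with f(a◁b) = f(a)◁f(b) for all a,b ∈ S (a virtual shelf), and let n ≥ 2. Define for 1 ≤ i ≤ n−1 the maps T_i(a_1,…,a_n) = (a_1,…,a_{i−1}, a_{i+1}, a_i◁a_{i+1}, a_{i+2},…,a_n) and Z_i^f(a_1,…,a_n) = (a_1,…,a_{i−1}, f^{−1}(a_{i+1}), f(a_i), a_{i+2},…,a_n) on S^n. Then the assignments σ_i ↦ T_i and ζ_i ↦ Z_i^f define a monoid homomorphism from the positive virtual braid monoid VB_n^+ to the monoid of self-maps of S^n under composition. -/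
/-- The defining relations of the positive virtual braid monoid `VB_{m+1}^+` on
generators `σ_i = Sum.inl i` and `ζ_i = Sum.inr i`, `i : Fin m`. -/
def vbMonoidRels (m : ℕ) :
    FreeMonoid (Fin m ⊕ Fin m) → FreeMonoid (Fin m ⊕ Fin m) → Prop :=
  let σ : Fin m → FreeMonoid (Fin m ⊕ Fin m) := fun i => FreeMonoid.of (Sum.inl i)
  let ζ : Fin m → FreeMonoid (Fin m ⊕ Fin m) := fun i => FreeMonoid.of (Sum.inr i)
  fun a b =>
    (∃ i j : Fin m, (i : ℕ) + 2 ≤ (j : ℕ) ∧ a = σ i * σ j ∧ b = σ j * σ i) ∨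
    (∃ i j : Fin m, (i : ℕ) + 2 ≤ (j : ℕ) ∧ a = ζ i * ζ j ∧ b = ζ j * ζ i) ∨
    (∃ i j : Fin m, ((i : ℕ) + 2 ≤ (j : ℕ) ∨ (j : ℕ) + 2 ≤ (i : ℕ)) ∧
      a = σ i * ζ j ∧ b = ζ j * σ i) ∨
    (∃ i j : Fin m, (i : ℕ) + 1 = (j : ℕ) ∧ a = σ i * σ j * σ i ∧ b = σ j * σ i * σ j) ∨
    (∃ i j : Fin m, (i : ℕ) + 1 = (j : ℕ) ∧ a = ζ i * ζ j * ζ i ∧ b = ζ j * ζ i * ζ j) ∨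
    (∃ i j : Fin m, (i : ℕ) + 1 = (j : ℕ) ∧ a = ζ i * ζ j * σ i ∧ b = σ j * ζ i * ζ j) ∨
    (∃ i : Fin m, a = ζ i * ζ i ∧ b = 1)

theorem braidMap_apply' {S : Type*} (op : S → S → S) {m : ℕ} (i : Fin m) (a : Fin (m+1) → S)
    (k : Fin (m+1)) :
    braidMap op i a k =
      if (k : ℕ) = (i : ℕ) + 1 then
        op (a ⟨i, by omega⟩) (a ⟨(i:ℕ)+1, by omega⟩)
      else if (k : ℕ) = (i : ℕ) then a ⟨(i:ℕ)+1, by omega⟩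
      else a k := by
  have h1 : i.castSucc = (⟨(i:ℕ), by omega⟩ : Fin (m+1)) := rfl
  have h2 : i.succ = (⟨(i:ℕ)+1, by omega⟩ : Fin (m+1)) := rfl
  simp only [braidMap, Function.update_apply, Fin.ext_iff, Fin.val_succ, Fin.coe_castSucc, h1, h2]

theorem vswapMap_apply' {S : Type*} (f : S ≃ S) {m : ℕ} (i : Fin m) (a : Fin (m+1) → S)
    (k : Fin (m+1)) :
    vswapMap f i a k =
      if (k : ℕ) = (i : ℕ) + 1 then f (a ⟨i, by omega⟩)
      else if (k : ℕ) = (i : ℕ) then f.symm (a ⟨(i:ℕ)+1, by omega⟩)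
      else a k := by
  have h1 : i.castSucc = (⟨(i:ℕ), by omega⟩ : Fin (m+1)) := rfl
  have h2 : i.succ = (⟨(i:ℕ)+1, by omega⟩ : Fin (m+1)) := rfl
  simp only [vswapMap, Function.update_apply, Fin.ext_iff, Fin.val_succ, Fin.coe_castSucc, h1, h2]

section Rels

variable {S : Type*} (op : S → S → S) (f : S ≃ S) {m : ℕ}

theorem rel_ss (i j : Fin m) (h : (i:ℕ)+2 ≤ (j:ℕ)) (a : Fin (m+1) → S) :
    braidMap op i (braidMap op j a) = braidMap op j (braidMap op i a) := by
  funext k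
  simp only [braidMap_apply']
  split_ifs <;> first | rfl | omega | (exact congrArg a (Fin.ext (by first | omega | (simp only [Fin.val_mk]; omega) | (simp; omega))))

theorem rel_zz (i j : Fin m) (h : (i:ℕ)+2 ≤ (j:ℕ)) (a : Fin (m+1) → S) :
    vswapMap f i (vswapMap f j a) = vswapMap f j (vswapMap f i a) := by
  funext k
  simp only [vswapMap_apply']
  split_ifs <;> first | rfl | omega | (exact congrArg a (Fin.ext (by first | omega | (simp only [Fin.val_mk]; omega) | (simp; omega))))

theorem rel_sz (i j : Fin m) (h : (i:ℕ)+2 ≤ (j:ℕ) ∨ (j:ℕ)+2 ≤ (i:ℕ)) (a : Fin (m+1) → S) :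
    braidMap op i (vswapMap f j a) = vswapMap f j (braidMap op i a) := by
  funext k
  simp only [vswapMap_apply', braidMap_apply']
  split_ifs <;> first | rfl | omega | (exact congrArg a (Fin.ext (by first | omega | (simp only [Fin.val_mk]; omega) | (simp; omega))))

theorem rel_sss (hsd : ∀ a b c : S, op (op a b) c = op (op a c) (op b c))
    (i j : Fin m) (h : (i:ℕ)+1 = (j:ℕ)) (a : Fin (m+1) → S) :
    braidMap op i (braidMap op j (braidMap op i a)) =
      braidMap op j (braidMap op i (braidMap op j a)) := by
  funext k
  simp only [braidMap_apply', ← h]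
  split_ifs <;>
    first
      | rfl | omega
      | (exact congrArg a (Fin.ext (by first | omega | (simp only [Fin.val_mk]; omega) | (simp; omega))))
      | (exact (hsd _ _ _).symm)
      | exact hsd _ _ _

theorem rel_zzz (i j : Fin m) (h : (i:ℕ)+1 = (j:ℕ)) (a : Fin (m+1) → S) :
    vswapMap f i (vswapMap f j (vswapMap f i a)) =
      vswapMap f j (vswapMap f i (vswapMap f j a)) := by
  funext k
  simp only [vswapMap_apply', ← h]
  split_ifs <;>
    first
      | rfl | omega
      | (exact congrArg a (Fin.ext (by first | omega | (simp only [Fin.val_mk]; omega) | (simp; omega))))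
      | (simp only [Equiv.apply_symm_apply, Equiv.symm_apply_apply]
         try first | rfl | (exact congrArg a (Fin.ext (by first | omega | (simp only [Fin.val_mk]; omega) | (simp; omega)))))

theorem rel_zzs (hf : ∀ a b : S, f (op a b) = op (f a) (f b))
    (i j : Fin m) (h : (i:ℕ)+1 = (j:ℕ)) (a : Fin (m+1) → S) :
    vswapMap f i (vswapMap f j (braidMap op i a)) =
      braidMap op j (vswapMap f i (vswapMap f j a)) := by
  funext k
  simp only [vswapMap_apply', braidMap_apply', ← h]
  split_ifs <;>
    first
      | rfl | omega
      | (exact congrArg a (Fin.ext (by first | omega | (simp only [Fin.val_mk]; omega) | (simp; omega))))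
      | (simp only [Equiv.apply_symm_apply, Equiv.symm_apply_apply, hf]
         try first | rfl | (exact congrArg a (Fin.ext (by first | omega | (simp only [Fin.val_mk]; omega) | (simp; omega)))))

theorem rel_z2 (i : Fin m) (a : Fin (m+1) → S) : vswapMap f i (vswapMap f i a) = a := by
  funext k
  simp only [vswapMap_apply']
  split_ifs <;>
    first
      | rfl | omega
      | (exact congrArg a (Fin.ext (by first | omega | (simp only [Fin.val_mk]; omega) | (simp; omega))))
      | (simp only [Equiv.apply_symm_apply, Equiv.symm_apply_apply]
         try first | rfl | (exact congrArg a (Fin.ext (by first | omega | (simp only [Fin.val_mk]; omega) | (simp; omega)))))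

end Rels

/-- For a virtual shelf `(S, ◁, f)` and `n = m+1 ≥ 2` strands,
`σ_i ↦ T_i`, `ζ_i ↦ Z_i^f` defines a monoid homomorphism `VB_n^+ → End(S^n)`. -/
theorem stmt6 {S : Type*} (op : S → S → S)
    (hsd : ∀ a b c : S, op (op a b) c = op (op a c) (op b c))
    (f : S ≃ S) (hf : ∀ a b : S, f (op a b) = op (f a) (f b))
    {m : ℕ} (hm : 1 ≤ m) :
    ∃ ρ : PresentedMonoid (vbMonoidRels m) →* Function.End (Fin (m + 1) → S),
      ∀ i : Fin m,
        ρ (PresentedMonoid.of (vbMonoidRels m) (Sum.inl i)) = braidMap op i ∧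
        ρ (PresentedMonoid.of (vbMonoidRels m) (Sum.inr i)) = vswapMap f i := by
  set F : Fin m ⊕ Fin m → Function.End (Fin (m + 1) → S) :=
    Sum.elim (fun i => braidMap op i) (fun i => vswapMap f i) with hF
  have key : ∀ a b : FreeMonoid (Fin m ⊕ Fin m), vbMonoidRels m a b →
      FreeMonoid.lift F a = FreeMonoid.lift F b := by
    intro a b hab
    rcases hab with ⟨i, j, hij, rfl, rfl⟩ | ⟨i, j, hij, rfl, rfl⟩ | ⟨i, j, hij, rfl, rfl⟩ |
      ⟨i, j, hij, rfl, rfl⟩ | ⟨i, j, hij, rfl, rfl⟩ | ⟨i, j, hij, rfl, rfl⟩ | ⟨i, rfl, rfl⟩ <;>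
      simp only [map_mul, map_one, FreeMonoid.lift_eval_of, hF, Sum.elim_inl, Sum.elim_inr]
    · exact funext fun a => rel_ss op i j hij a
    · exact funext fun a => rel_zz f i j hij a
    · exact funext fun a => (rel_sz op f i j hij a)
    · exact funext fun a => rel_sss op hsd i j hij a
    · exact funext fun a => rel_zzz f i j hij a
    · exact funext fun a => rel_zzs op f hf i j hij a
    · exact funext fun a => rel_z2 f i a
  exact ⟨PresentedMonoid.lift F key, fun i => ⟨rfl, rfl⟩⟩
end

section
/- Let FS_ℤ be the free shelf on the generators {x_k : k ∈ ℤ}. The generator shift x_k ↦ x_{k+1} induces a well-defined shelf automorphism f of FS_ℤ, and the triple (FS_ℤ, f, x_0) is the free virtual shelf on one generator: for every shelf (T,◁') equipped with a shelf automorphism g and every element t ∈ T, there exists a unique shelf homomorphism φ : FS_ℤ → T (i.e. φ(a◁b) = φ(a)◁'φ(b)) such that φ(x_0) = t and φ ∘ f = g ∘ φ. -/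
universe u

def sdRel (α : Type*) : FreeMagma α → FreeMagma α → Prop := fun a b =>
  ∃ t u v : FreeMagma α, a = t * u * v ∧ b = (t * v) * (u * v)

abbrev FreeShelf (α : Type*) := (conGen (sdRel α)).Quotient

def FreeShelf.of {α : Type*} (x : α) : FreeShelf α := (FreeMagma.of x : FreeMagma α)

lemma FreeShelf.sd {α : Type*} (a b c : FreeShelf α) : a * b * c = (a * c) * (b * c) := by
  induction a using Quotient.ind
  induction b using Quotient.ind
  induction c using Quotient.ind
  exact Quot.sound (ConGen.Rel.of _ _ ⟨_, _, _, rfl, rfl⟩)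

lemma conGen_resp {β : Type*} [Mul β] (hsd : ∀ a b c : β, a * b * c = (a * c) * (b * c))
    (e : FreeMagma ℤ →ₙ* β) {a b : FreeMagma ℤ} (h : conGen (sdRel ℤ) a b) : e a = e b := by
  induction h with
  | of a b hab =>
    obtain ⟨x, y, z, rfl, rfl⟩ := hab
    simp only [map_mul]
    exact hsd _ _ _
  | refl => rfl
  | symm _ ih => exact ih.symm
  | trans _ _ ih1 ih2 => exact ih1.trans ih2
  | mul _ _ ih1 ih2 => simp only [map_mul]; rw [ih1, ih2]

/-- Lift a map on generators, into any shelf, to the free shelf. -/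
def toShelf {β : Type*} [Mul β] (hsd : ∀ a b c : β, a * b * c = (a * c) * (b * c))
    (e0 : ℤ → β) : FreeShelf ℤ → β :=
  Quotient.lift (FreeMagma.lift e0) (fun _ _ h => conGen_resp hsd _ h)

lemma toShelf_coe {β : Type*} [Mul β] (hsd : ∀ a b c : β, a * b * c = (a * c) * (b * c))
    (e0 : ℤ → β) (w : FreeMagma ℤ) : toShelf hsd e0 (w : FreeShelf ℤ) = FreeMagma.lift e0 w :=
  rfl

lemma toShelf_mul {β : Type*} [Mul β] (hsd : ∀ a b c : β, a * b * c = (a * c) * (b * c))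
    (e0 : ℤ → β) (a b : FreeShelf ℤ) :
    toShelf hsd e0 (a * b) = toShelf hsd e0 a * toShelf hsd e0 b := by
  induction a using Quotient.ind
  induction b using Quotient.ind
  exact map_mul (FreeMagma.lift e0) _ _

lemma coe_mul {α : Type*} (a b : FreeMagma α) :
    Quotient.mk (conGen (sdRel α)).toSetoid (a * b) =
      @HMul.hMul (FreeShelf α) (FreeShelf α) (FreeShelf α) instHMul
        (Quotient.mk _ a) (Quotient.mk _ b) := rfl

noncomputable def shiftQ (n : ℤ) : FreeShelf ℤ → FreeShelf ℤ :=
  toShelf FreeShelf.sd (fun k => FreeShelf.of (k + n))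

lemma shiftQ_mul (n : ℤ) (a b : FreeShelf ℤ) :
    shiftQ n (a * b) = shiftQ n a * shiftQ n b := toShelf_mul _ _ a b

lemma shiftQ_inv (n : ℤ) (x : FreeShelf ℤ) : shiftQ (-n) (shiftQ n x) = x := by
  induction x using Quotient.ind with
  | _ w =>
    induction w with
    | ih1 k =>
      show FreeShelf.of (k + n + -n) = FreeShelf.of k
      rw [add_neg_cancel_right]
    | ih2 a b iha ihb =>
      have key : ∀ A B : FreeShelf ℤ, shiftQ (-n) (shiftQ n A) = A → shiftQ (-n) (shiftQ n B) = B →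
          shiftQ (-n) (shiftQ n (A * B)) = A * B := by
        intro A B iha ihb
        rw [shiftQ_mul, shiftQ_mul, iha, ihb]
      exact key _ _ iha ihb

noncomputable def shiftEquiv : FreeShelf ℤ ≃ FreeShelf ℤ where
  toFun := shiftQ 1
  invFun := shiftQ (-1)
  left_inv := shiftQ_inv 1
  right_inv := fun x => by simpa using shiftQ_inv (-1) x

/-- The generator shift `x_k ↦ x_{k+1}` induces a shelf automorphism `f`
of the free shelf `FS_ℤ`, and `(FS_ℤ, f, x_0)` is the free virtual shelf on one
generator: for every shelf `(T, ◁')` with a shelf automorphism `g` and every `t ∈ T`,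
there is a unique shelf homomorphism `φ : FS_ℤ → T` with `φ(x_0) = t` and `φ∘f = g∘φ`. -/
theorem stmt7 :
    ∃ f : FreeShelf ℤ ≃ FreeShelf ℤ,
      (∀ a b : FreeShelf ℤ, f (a * b) = f a * f b) ∧
      (∀ k : ℤ, f (FreeShelf.of k) = FreeShelf.of (k + 1)) ∧
      ∀ (T : Type u) (op : T → T → T),
        (∀ a b c : T, op (op a b) c = op (op a c) (op b c)) →
        ∀ g : T ≃ T, (∀ a b : T, g (op a b) = op (g a) (g b)) →
        ∀ t : T, ∃! φ : FreeShelf ℤ → T,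
          (∀ a b : FreeShelf ℤ, φ (a * b) = op (φ a) (φ b)) ∧
          φ (FreeShelf.of 0) = t ∧ φ ∘ f = g ∘ φ := by
  have fmul : ∀ a b : FreeShelf ℤ, shiftEquiv (a * b) = shiftEquiv a * shiftEquiv b :=
    fun a b => toShelf_mul FreeShelf.sd _ a b
  have fof : ∀ k : ℤ, shiftEquiv (FreeShelf.of k) = FreeShelf.of (k + 1) := fun k => rfl
  refine ⟨shiftEquiv, fmul, fof, ?_⟩
  intro T op hop g hg t
  letI : Mul T := ⟨op⟩
  have hsd : ∀ a b c : T, a * b * c = (a * c) * (b * c) := hop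
  set φ : FreeShelf ℤ → T := toShelf hsd (fun k => (g ^ k) t) with hφ
  have hmul : ∀ a b : FreeShelf ℤ, φ (a * b) = op (φ a) (φ b) := toShelf_mul hsd _
  have hof : ∀ k : ℤ, φ (FreeShelf.of k) = (g ^ k) t := fun k => rfl
  have gpow_succ : ∀ k : ℤ, (g ^ (k + 1)) t = g ((g ^ k) t) := by
    intro k
    rw [add_comm, zpow_add, zpow_one]
    rfl
  have hcomm : φ ∘ shiftEquiv = g ∘ φ := by
    funext x
    induction x using Quotient.ind with
    | _ w =>
      induction w with
      | ih1 k =>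
        show φ (FreeShelf.of (k + 1)) = g (φ (FreeShelf.of k))
        rw [hof, hof, gpow_succ]
      | ih2 a b iha ihb =>
        have key : ∀ A B : FreeShelf ℤ, (φ ∘ shiftEquiv) A = (g ∘ φ) A →
            (φ ∘ shiftEquiv) B = (g ∘ φ) B → (φ ∘ shiftEquiv) (A * B) = (g ∘ φ) (A * B) := by
          intro A B iha ihb
          simp only [Function.comp_apply] at iha ihb ⊢
          rw [fmul, hmul, hmul, iha, ihb, hg]
        exact key _ _ iha ihb
  refine ⟨φ, ⟨hmul, hof 0, hcomm⟩, ?_⟩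
  rintro ψ ⟨ψmul, ψ0, ψcomm⟩
  have step : ∀ k : ℤ, ψ (FreeShelf.of (k + 1)) = g (ψ (FreeShelf.of k)) := by
    intro k
    have := congrFun ψcomm (FreeShelf.of k)
    rw [Function.comp_apply, Function.comp_apply, fof] at this
    exact this
  have ψof : ∀ k : ℤ, ψ (FreeShelf.of k) = (g ^ k) t := by
    intro k
    induction k using Int.induction_on with
    | zero => exact ψ0
    | succ n ih => rw [step, ih, gpow_succ]
    | pred n ih =>
      have h := step (-(n : ℤ) - 1)
      rw [sub_add_cancel, ih] at h
      have h2 : ψ (FreeShelf.of (-(n : ℤ) - 1)) = g⁻¹ ((g ^ (-(n : ℤ))) t) := by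
        apply g.injective
        rw [← h]
        simp
      rw [h2, show (-(n : ℤ) - 1) = -1 + -n by ring, zpow_add, zpow_neg_one]
      rfl
  funext x
  induction x using Quotient.ind with
  | _ w =>
    induction w with
    | ih1 k =>
      show ψ (FreeShelf.of k) = φ (FreeShelf.of k)
      rw [ψof, hof]
    | ih2 a b iha ihb =>
      have key : ∀ A B : FreeShelf ℤ, ψ A = φ A → ψ B = φ B → ψ (A * B) = φ (A * B) := by
        intro A B iha ihb
        rw [ψmul, hmul, iha, ihb]
      exact key _ _ iha ihb
end

section
/- Let R be a commutative ring, V an R-module, [,] : V × V → V an R-bilinear map satisfying the Leibniz identity [v,[w,u]] = [[v,w],u] − [[v,u],w] for all v,w,u ∈ V, and e ∈ V an element with [v,e] = 0 and [e,v] = 0 for all v ∈ V (a Lie unit). Let σ : V ⊗_R V → V ⊗_R V be the R-linear map determined by σ(a ⊗ b) = b ⊗ a + e ⊗ [a,b]. Then σ satisfies the Yang–Baxter equation (σ ⊗ id) ∘ (id ⊗ σ) ∘ (σ ⊗ id) = (id ⊗ σ) ∘ (σ ⊗ id) ∘ (id ⊗ σ) on V ⊗ V ⊗ V, and σ is a linear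 automorphism of V ⊗ V, with inverse determined by σ^{−1}(a ⊗ b) = b ⊗ a − [b,a] ⊗ e. -/
open TensorProduct

/-- For a Leibniz bracket `[,]` on an `R`-module `V` with a Lie unit `e`,
the linear map `σ : V ⊗ V → V ⊗ V`, `a ⊗ b ↦ b ⊗ a + e ⊗ [a,b]`, satisfies the
Yang–Baxter equation, and it is a linear automorphism of `V ⊗ V`, with inverse
determined by `a ⊗ b ↦ b ⊗ a − [b,a] ⊗ e`. -/
theorem stmt15 {R : Type*} [CommRing R] {V : Type*} [AddCommGroup V] [Module R V]
    (br : V →ₗ[R] V →ₗ[R] V)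
    (hLei : ∀ v w u : V, br v (br w u) = br (br v w) u - br (br v u) w)
    (e : V) (he₁ : ∀ v : V, br v e = 0) (he₂ : ∀ v : V, br e v = 0)
    (σ : V ⊗[R] V →ₗ[R] V ⊗[R] V)
    (hσ : ∀ a b : V, σ (a ⊗ₜ[R] b) = b ⊗ₜ[R] a + e ⊗ₜ[R] (br a b)) :
    (let σ₁ : (V ⊗[R] V) ⊗[R] V →ₗ[R] (V ⊗[R] V) ⊗[R] V := LinearMap.rTensor V σ
     let σ₂ : (V ⊗[R] V) ⊗[R] V →ₗ[R] (V ⊗[R] V) ⊗[R] V :=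
       (TensorProduct.assoc R V V V).symm.toLinearMap ∘ₗ LinearMap.lTensor V σ ∘ₗ
         (TensorProduct.assoc R V V V).toLinearMap
     σ₁ ∘ₗ σ₂ ∘ₗ σ₁ = σ₂ ∘ₗ σ₁ ∘ₗ σ₂) ∧
    Function.Bijective σ ∧
    ∃ τ : V ⊗[R] V →ₗ[R] V ⊗[R] V,
      (∀ a b : V, τ (a ⊗ₜ[R] b) = b ⊗ₜ[R] a - (br b a) ⊗ₜ[R] e) ∧
      τ ∘ₗ σ = LinearMap.id ∧ σ ∘ₗ τ = LinearMap.id := by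
  -- define τ
  set τ : V ⊗[R] V →ₗ[R] V ⊗[R] V :=
    TensorProduct.lift (LinearMap.mk₂ R (fun a b => b ⊗ₜ[R] a - (br b a) ⊗ₜ[R] e)
      (by intro a b c; simp [tmul_add, add_tmul]; abel)
      (by intro r a b; simp [tmul_smul, smul_tmul', smul_sub])
      (by intro a b c; simp [tmul_add, add_tmul]; abel)
      (by intro r a b; simp [tmul_smul, smul_tmul', smul_sub])) with hτdef
  have hτ : ∀ a b : V, τ (a ⊗ₜ[R] b) = b ⊗ₜ[R] a - (br b a) ⊗ₜ[R] e := by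
    intro a b; simp [hτdef]
  have hτσ : τ ∘ₗ σ = LinearMap.id := by
    apply TensorProduct.ext'
    intro a b
    simp [hσ, hτ, he₁, he₂]
  have hστ : σ ∘ₗ τ = LinearMap.id := by
    apply TensorProduct.ext'
    intro a b
    simp [hσ, hτ, he₁, he₂, tmul_sub, sub_tmul]
  refine ⟨?_, ?_, τ, hτ, hτσ, hστ⟩
  · intro σ₁ σ₂
    apply TensorProduct.ext_threefold
    intro a b c
    simp only [σ₁, σ₂, LinearMap.comp_apply, LinearEquiv.coe_coe, assoc_tmul,
      LinearMap.rTensor_tmul, LinearMap.lTensor_tmul, hσ, add_tmul, tmul_add, map_add,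
      assoc_symm_tmul, he₁, he₂, map_zero, tmul_zero, add_zero]
    have h := hLei a b c
    rw [show br (br a b) c = br a (br b c) + br (br a c) b by rw [hLei]; abel]
    simp [tmul_add]
    abel
  · exact Function.bijective_iff_has_inverse.mpr
      ⟨τ, fun x => LinearMap.congr_fun hτσ x, fun x => LinearMap.congr_fun hστ x⟩
end

section
/- Let R be a commutative ring, V an R-module, σ : V ⊗_R V → V ⊗_R V a linear map satisfying the Yang–Baxter equation, and f : V → V a linear automorphism with (f ⊗ f) ∘ σ = σ ∘ (f ⊗ f). Then: (1) σ'' := (f ⊗ f^{−1}) ∘ σ ∘ (f^{−1} ⊗ f) also satisfies the Yang–Baxter equation; (2) for every n ≥ 2, the automorphism F := f^0 ⊗ f^{−2} ⊗ f^{−4} ⊗ ⋯ ⊗ f^{−2(n−1)} of V^{⊗n} intertwines the two families of braid operators: F ∘ σ_i = σ''_i ∘ F for all 1 ≤ i ≤ n−1, where σ_i = id^{⊗(i−1)} ⊗ σ ⊗ id^{⊗(n−i−1)} and σ''_i = id^{⊗(i−1)} ⊗ σ'' ⊗ id^{⊗(n−i−1)}. In particular the representations of the braid group B_n on V^{⊗n}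 defined by σ and by σ'' are equivalent. -/
open TensorProduct

section Stmt17Helpers

variable {R : Type*} [CommRing R] {V : Type*} [AddCommGroup V] [Module R V]

private lemma stmt17_mul_toLin (g h : V ≃ₗ[R] V) :
    (g * h).toLinearMap = g.toLinearMap ∘ₗ h.toLinearMap := rfl

private lemma stmt17_zcomp (f : V ≃ₗ[R] V) (a b c : ℤ) (h : c = a + b) :
    (f ^ a).toLinearMap ∘ₗ (f ^ b).toLinearMap = (f ^ c).toLinearMap := by
  subst h; rw [zpow_add]; rfl

private lemma stmt17_zcomp0 (f : V ≃ₗ[R] V) (a b : ℤ) (h : a + b = 0) :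
    (f ^ a).toLinearMap ∘ₗ (f ^ b).toLinearMap = LinearMap.id := by
  rw [stmt17_zcomp f a b 0 h.symm]; rfl

private lemma stmt17_bij {M N : Type*} [AddCommGroup M] [Module R M] [AddCommGroup N] [Module R N]
    (A : M →ₗ[R] N) (B : N →ₗ[R] M) (h1 : A ∘ₗ B = LinearMap.id) (h2 : B ∘ₗ A = LinearMap.id) :
    Function.Bijective A :=
  Function.bijective_iff_has_inverse.mpr
    ⟨B, fun x => LinearMap.congr_fun h2 x, fun x => LinearMap.congr_fun h1 x⟩

variable (σ : V ⊗[R] V →ₗ[R] V ⊗[R] V) (f : V ≃ₗ[R] V)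

/-- σ commutes with all `f^k ⊗ f^k`, `k : ℤ`. -/
private lemma stmt17_comm (hf : (TensorProduct.map f.toLinearMap f.toLinearMap) ∘ₗ σ =
      σ ∘ₗ (TensorProduct.map f.toLinearMap f.toLinearMap)) (k : ℤ) :
    (TensorProduct.map (f ^ k).toLinearMap (f ^ k).toLinearMap) ∘ₗ σ =
      σ ∘ₗ (TensorProduct.map (f ^ k).toLinearMap (f ^ k).toLinearMap) := by
  have hinv : (TensorProduct.map f⁻¹.toLinearMap f⁻¹.toLinearMap) ∘ₗ σ =
      σ ∘ₗ (TensorProduct.map f⁻¹.toLinearMap f⁻¹.toLinearMap) := by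
    have e1 : TensorProduct.map f.toLinearMap f.toLinearMap ∘ₗ
        TensorProduct.map f⁻¹.toLinearMap f⁻¹.toLinearMap = LinearMap.id := by
      rw [← TensorProduct.map_comp, ← stmt17_mul_toLin, mul_inv_cancel]
      exact TensorProduct.map_id
    have e2 : TensorProduct.map f⁻¹.toLinearMap f⁻¹.toLinearMap ∘ₗ
        TensorProduct.map f.toLinearMap f.toLinearMap = LinearMap.id := by
      rw [← TensorProduct.map_comp, ← stmt17_mul_toLin, inv_mul_cancel]
      exact TensorProduct.map_id
    calc TensorProduct.map f⁻¹.toLinearMap f⁻¹.toLinearMap ∘ₗ σ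
        = TensorProduct.map f⁻¹.toLinearMap f⁻¹.toLinearMap ∘ₗ (σ ∘ₗ
            (TensorProduct.map f.toLinearMap f.toLinearMap ∘ₗ
              TensorProduct.map f⁻¹.toLinearMap f⁻¹.toLinearMap)) := by
          rw [e1, LinearMap.comp_id]
      _ = (TensorProduct.map f⁻¹.toLinearMap f⁻¹.toLinearMap ∘ₗ
            (TensorProduct.map f.toLinearMap f.toLinearMap ∘ₗ σ)) ∘ₗ
            TensorProduct.map f⁻¹.toLinearMap f⁻¹.toLinearMap := by
          rw [hf]; simp only [LinearMap.comp_assoc]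
      _ = σ ∘ₗ TensorProduct.map f⁻¹.toLinearMap f⁻¹.toLinearMap := by
          rw [← LinearMap.comp_assoc, e2, LinearMap.id_comp]
  induction k using Int.induction_on with
  | zero => simp [TensorProduct.map_id]
  | succ m ih =>
      have hm : (f ^ ((m : ℤ) + 1)).toLinearMap =
          (f ^ (m : ℤ)).toLinearMap ∘ₗ f.toLinearMap := by
        rw [zpow_add_one]; rfl
      rw [hm, TensorProduct.map_comp, LinearMap.comp_assoc, hf, ← LinearMap.comp_assoc, ih,
        LinearMap.comp_assoc, ← TensorProduct.map_comp]
  | pred m ih =>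
      have hm : (f ^ (-(m : ℤ) - 1)).toLinearMap =
          (f ^ (-(m : ℤ))).toLinearMap ∘ₗ f⁻¹.toLinearMap := by
        rw [zpow_sub_one]; rfl
      rw [hm, TensorProduct.map_comp, LinearMap.comp_assoc, hinv, ← LinearMap.comp_assoc, ih,
        LinearMap.comp_assoc, ← TensorProduct.map_comp]

/-- The key intertwining identity: `σ'' ∘ (f^a ⊗ f^{a-2}) = (f^a ⊗ f^{a-2}) ∘ σ`. -/
private lemma stmt17_key (hf : (TensorProduct.map f.toLinearMap f.toLinearMap) ∘ₗ σ =
      σ ∘ₗ (TensorProduct.map f.toLinearMap f.toLinearMap)) (a b : ℤ) (hab : b = a - 2) :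
    ((TensorProduct.map f.toLinearMap f.symm.toLinearMap) ∘ₗ σ ∘ₗ
        (TensorProduct.map f.symm.toLinearMap f.toLinearMap)) ∘ₗ
      TensorProduct.map (f ^ a).toLinearMap (f ^ b).toLinearMap =
    TensorProduct.map (f ^ a).toLinearMap (f ^ b).toLinearMap ∘ₗ σ := by
  subst hab
  have hs : f.symm.toLinearMap = (f ^ (-1 : ℤ)).toLinearMap := by rw [zpow_neg_one]; rfl
  have ht : f.toLinearMap = (f ^ (1 : ℤ)).toLinearMap := by rw [zpow_one]
  have h1 : TensorProduct.map f.symm.toLinearMap f.toLinearMap ∘ₗ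
      TensorProduct.map (f ^ a).toLinearMap (f ^ (a - 2)).toLinearMap =
      TensorProduct.map (f ^ (a - 1)).toLinearMap (f ^ (a - 1)).toLinearMap := by
    rw [hs, ht, ← TensorProduct.map_comp, stmt17_zcomp f _ _ _ (by ring : a - 1 = -1 + a),
      stmt17_zcomp f _ _ _ (by ring : a - 1 = 1 + (a - 2))]
  have h2 : TensorProduct.map f.toLinearMap f.symm.toLinearMap ∘ₗ
      TensorProduct.map (f ^ (a - 1)).toLinearMap (f ^ (a - 1)).toLinearMap =
      TensorProduct.map (f ^ a).toLinearMap (f ^ (a - 2)).toLinearMap := by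
    rw [hs, ht, ← TensorProduct.map_comp, stmt17_zcomp f _ _ _ (by ring : a = 1 + (a - 1)),
      stmt17_zcomp f _ _ _ (by ring : a - 2 = -1 + (a - 1))]
  calc ((TensorProduct.map f.toLinearMap f.symm.toLinearMap) ∘ₗ σ ∘ₗ
        (TensorProduct.map f.symm.toLinearMap f.toLinearMap)) ∘ₗ
      TensorProduct.map (f ^ a).toLinearMap (f ^ (a - 2)).toLinearMap
      = (TensorProduct.map f.toLinearMap f.symm.toLinearMap) ∘ₗ σ ∘ₗ
        TensorProduct.map (f ^ (a - 1)).toLinearMap (f ^ (a - 1)).toLinearMap := by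
        simp only [LinearMap.comp_assoc, h1]
    _ = ((TensorProduct.map f.toLinearMap f.symm.toLinearMap) ∘ₗ
        TensorProduct.map (f ^ (a - 1)).toLinearMap (f ^ (a - 1)).toLinearMap) ∘ₗ σ := by
        rw [← stmt17_comm σ f hf (a - 1)]; simp only [LinearMap.comp_assoc]
    _ = _ := by rw [h2]


private lemma stmt17_part1
    (hYB :
      (LinearMap.rTensor V σ) ∘ₗ
          ((TensorProduct.assoc R V V V).symm.toLinearMap ∘ₗ LinearMap.lTensor V σ ∘ₗ
            (TensorProduct.assoc R V V V).toLinearMap) ∘ₗ (LinearMap.rTensor V σ) =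
        ((TensorProduct.assoc R V V V).symm.toLinearMap ∘ₗ LinearMap.lTensor V σ ∘ₗ
            (TensorProduct.assoc R V V V).toLinearMap) ∘ₗ (LinearMap.rTensor V σ) ∘ₗ
          ((TensorProduct.assoc R V V V).symm.toLinearMap ∘ₗ LinearMap.lTensor V σ ∘ₗ
            (TensorProduct.assoc R V V V).toLinearMap))
    (hf : (TensorProduct.map f.toLinearMap f.toLinearMap) ∘ₗ σ =
      σ ∘ₗ (TensorProduct.map f.toLinearMap f.toLinearMap)) :
    (LinearMap.rTensor V ((TensorProduct.map f.toLinearMap f.symm.toLinearMap) ∘ₗ σ ∘ₗ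
        (TensorProduct.map f.symm.toLinearMap f.toLinearMap))) ∘ₗ
        ((TensorProduct.assoc R V V V).symm.toLinearMap ∘ₗ
          LinearMap.lTensor V ((TensorProduct.map f.toLinearMap f.symm.toLinearMap) ∘ₗ σ ∘ₗ
            (TensorProduct.map f.symm.toLinearMap f.toLinearMap)) ∘ₗ
          (TensorProduct.assoc R V V V).toLinearMap) ∘ₗ
        (LinearMap.rTensor V ((TensorProduct.map f.toLinearMap f.symm.toLinearMap) ∘ₗ σ ∘ₗ
          (TensorProduct.map f.symm.toLinearMap f.toLinearMap))) =
      ((TensorProduct.assoc R V V V).symm.toLinearMap ∘ₗ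
          LinearMap.lTensor V ((TensorProduct.map f.toLinearMap f.symm.toLinearMap) ∘ₗ σ ∘ₗ
            (TensorProduct.map f.symm.toLinearMap f.toLinearMap)) ∘ₗ
          (TensorProduct.assoc R V V V).toLinearMap) ∘ₗ
        (LinearMap.rTensor V ((TensorProduct.map f.toLinearMap f.symm.toLinearMap) ∘ₗ σ ∘ₗ
          (TensorProduct.map f.symm.toLinearMap f.toLinearMap))) ∘ₗ
        ((TensorProduct.assoc R V V V).symm.toLinearMap ∘ₗ
          LinearMap.lTensor V ((TensorProduct.map f.toLinearMap f.symm.toLinearMap) ∘ₗ σ ∘ₗ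
            (TensorProduct.map f.symm.toLinearMap f.toLinearMap)) ∘ₗ
          (TensorProduct.assoc R V V V).toLinearMap) := by
  set σ'' : V ⊗[R] V →ₗ[R] V ⊗[R] V :=
    (TensorProduct.map f.toLinearMap f.symm.toLinearMap) ∘ₗ σ ∘ₗ
      (TensorProduct.map f.symm.toLinearMap f.toLinearMap) with hσ''
  set G : (V ⊗[R] V) ⊗[R] V →ₗ[R] (V ⊗[R] V) ⊗[R] V :=
    TensorProduct.map
      (TensorProduct.map (f ^ (0 : ℤ)).toLinearMap (f ^ (-2 : ℤ)).toLinearMap)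
      (f ^ (-4 : ℤ)).toLinearMap with hG
  -- G is surjective
  have hGsurj : Function.Surjective G := by
    have h1 : G ∘ₗ TensorProduct.map
        (TensorProduct.map (f ^ (0 : ℤ)).toLinearMap (f ^ (2 : ℤ)).toLinearMap)
        (f ^ (4 : ℤ)).toLinearMap = LinearMap.id := by
      rw [hG, ← TensorProduct.map_comp, ← TensorProduct.map_comp,
        stmt17_zcomp0 f _ _ (by norm_num), stmt17_zcomp0 f _ _ (by norm_num),
        stmt17_zcomp0 f _ _ (by norm_num), TensorProduct.map_id, TensorProduct.map_id]
    intro x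
    exact ⟨_, LinearMap.congr_fun h1 x⟩
  -- G intertwines σ₁ with σ''₁
  have hG1 : LinearMap.rTensor V σ'' ∘ₗ G = G ∘ₗ LinearMap.rTensor V σ := by
    show TensorProduct.map σ'' LinearMap.id ∘ₗ G = G ∘ₗ TensorProduct.map σ LinearMap.id
    rw [hG, ← TensorProduct.map_comp, ← TensorProduct.map_comp, LinearMap.id_comp,
      LinearMap.comp_id, hσ'', stmt17_key σ f hf 0 (-2) (by norm_num)]
  -- G intertwines σ₂ with σ''₂
  have hG2 : ((TensorProduct.assoc R V V V).symm.toLinearMap ∘ₗ LinearMap.lTensor V σ'' ∘ₗ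
        (TensorProduct.assoc R V V V).toLinearMap) ∘ₗ G =
      G ∘ₗ ((TensorProduct.assoc R V V V).symm.toLinearMap ∘ₗ LinearMap.lTensor V σ ∘ₗ
        (TensorProduct.assoc R V V V).toLinearMap) := by
    have hassoc : (TensorProduct.assoc R V V V).toLinearMap ∘ₗ G =
        TensorProduct.map (f ^ (0 : ℤ)).toLinearMap
          (TensorProduct.map (f ^ (-2 : ℤ)).toLinearMap (f ^ (-4 : ℤ)).toLinearMap) ∘ₗ
          (TensorProduct.assoc R V V V).toLinearMap := by
      rw [hG, TensorProduct.map_map_comp_assoc_eq]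
    have hassoc' : G ∘ₗ (TensorProduct.assoc R V V V).symm.toLinearMap =
        (TensorProduct.assoc R V V V).symm.toLinearMap ∘ₗ
          TensorProduct.map (f ^ (0 : ℤ)).toLinearMap
            (TensorProduct.map (f ^ (-2 : ℤ)).toLinearMap (f ^ (-4 : ℤ)).toLinearMap) := by
      rw [hG, TensorProduct.map_map_comp_assoc_symm_eq]
    have hmid : LinearMap.lTensor V σ'' ∘ₗ
        TensorProduct.map (f ^ (0 : ℤ)).toLinearMap
          (TensorProduct.map (f ^ (-2 : ℤ)).toLinearMap (f ^ (-4 : ℤ)).toLinearMap) =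
        TensorProduct.map (f ^ (0 : ℤ)).toLinearMap
          (TensorProduct.map (f ^ (-2 : ℤ)).toLinearMap (f ^ (-4 : ℤ)).toLinearMap) ∘ₗ
          LinearMap.lTensor V σ := by
      show TensorProduct.map LinearMap.id σ'' ∘ₗ _ = _ ∘ₗ TensorProduct.map LinearMap.id σ
      rw [← TensorProduct.map_comp, ← TensorProduct.map_comp, LinearMap.id_comp,
        LinearMap.comp_id, hσ'', stmt17_key σ f hf (-2) (-4) (by norm_num)]
    calc ((TensorProduct.assoc R V V V).symm.toLinearMap ∘ₗ LinearMap.lTensor V σ'' ∘ₗ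
          (TensorProduct.assoc R V V V).toLinearMap) ∘ₗ G
        = (TensorProduct.assoc R V V V).symm.toLinearMap ∘ₗ LinearMap.lTensor V σ'' ∘ₗ
          ((TensorProduct.assoc R V V V).toLinearMap ∘ₗ G) := by
          simp only [LinearMap.comp_assoc]
      _ = (TensorProduct.assoc R V V V).symm.toLinearMap ∘ₗ (LinearMap.lTensor V σ'' ∘ₗ
          TensorProduct.map (f ^ (0 : ℤ)).toLinearMap
            (TensorProduct.map (f ^ (-2 : ℤ)).toLinearMap (f ^ (-4 : ℤ)).toLinearMap)) ∘ₗ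
          (TensorProduct.assoc R V V V).toLinearMap := by
          rw [hassoc]; simp only [LinearMap.comp_assoc]
      _ = ((TensorProduct.assoc R V V V).symm.toLinearMap ∘ₗ
          TensorProduct.map (f ^ (0 : ℤ)).toLinearMap
            (TensorProduct.map (f ^ (-2 : ℤ)).toLinearMap (f ^ (-4 : ℤ)).toLinearMap)) ∘ₗ
          LinearMap.lTensor V σ ∘ₗ (TensorProduct.assoc R V V V).toLinearMap := by
          rw [hmid]; simp only [LinearMap.comp_assoc]
      _ = G ∘ₗ ((TensorProduct.assoc R V V V).symm.toLinearMap ∘ₗ LinearMap.lTensor V σ ∘ₗ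
          (TensorProduct.assoc R V V V).toLinearMap) := by
          rw [← hassoc']; simp only [LinearMap.comp_assoc]
  -- conclude by cancelling the surjective G
  rw [← LinearMap.cancel_right hGsurj]
  calc (LinearMap.rTensor V σ'' ∘ₗ
        ((TensorProduct.assoc R V V V).symm.toLinearMap ∘ₗ LinearMap.lTensor V σ'' ∘ₗ
          (TensorProduct.assoc R V V V).toLinearMap) ∘ₗ LinearMap.rTensor V σ'') ∘ₗ G
      = LinearMap.rTensor V σ'' ∘ₗ
        ((TensorProduct.assoc R V V V).symm.toLinearMap ∘ₗ LinearMap.lTensor V σ'' ∘ₗ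
          (TensorProduct.assoc R V V V).toLinearMap) ∘ₗ (LinearMap.rTensor V σ'' ∘ₗ G) := by
        simp only [LinearMap.comp_assoc]
    _ = LinearMap.rTensor V σ'' ∘ₗ
        (((TensorProduct.assoc R V V V).symm.toLinearMap ∘ₗ LinearMap.lTensor V σ'' ∘ₗ
          (TensorProduct.assoc R V V V).toLinearMap) ∘ₗ G) ∘ₗ LinearMap.rTensor V σ := by
        rw [hG1]; simp only [LinearMap.comp_assoc]
    _ = (LinearMap.rTensor V σ'' ∘ₗ G) ∘ₗ
        ((TensorProduct.assoc R V V V).symm.toLinearMap ∘ₗ LinearMap.lTensor V σ ∘ₗ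
          (TensorProduct.assoc R V V V).toLinearMap) ∘ₗ LinearMap.rTensor V σ := by
        rw [hG2]; simp only [LinearMap.comp_assoc]
    _ = G ∘ₗ LinearMap.rTensor V σ ∘ₗ
        ((TensorProduct.assoc R V V V).symm.toLinearMap ∘ₗ LinearMap.lTensor V σ ∘ₗ
          (TensorProduct.assoc R V V V).toLinearMap) ∘ₗ LinearMap.rTensor V σ := by
        rw [hG1]; simp only [LinearMap.comp_assoc]
    _ = G ∘ₗ ((TensorProduct.assoc R V V V).symm.toLinearMap ∘ₗ LinearMap.lTensor V σ ∘ₗ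
          (TensorProduct.assoc R V V V).toLinearMap) ∘ₗ LinearMap.rTensor V σ ∘ₗ
        ((TensorProduct.assoc R V V V).symm.toLinearMap ∘ₗ LinearMap.lTensor V σ ∘ₗ
          (TensorProduct.assoc R V V V).toLinearMap) := by rw [hYB]
    _ = (((TensorProduct.assoc R V V V).symm.toLinearMap ∘ₗ LinearMap.lTensor V σ'' ∘ₗ
          (TensorProduct.assoc R V V V).toLinearMap) ∘ₗ G) ∘ₗ LinearMap.rTensor V σ ∘ₗ
        ((TensorProduct.assoc R V V V).symm.toLinearMap ∘ₗ LinearMap.lTensor V σ ∘ₗ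
          (TensorProduct.assoc R V V V).toLinearMap) := by
        rw [hG2]; simp only [LinearMap.comp_assoc]
    _ = ((TensorProduct.assoc R V V V).symm.toLinearMap ∘ₗ LinearMap.lTensor V σ'' ∘ₗ
          (TensorProduct.assoc R V V V).toLinearMap) ∘ₗ (LinearMap.rTensor V σ'' ∘ₗ G) ∘ₗ
        ((TensorProduct.assoc R V V V).symm.toLinearMap ∘ₗ LinearMap.lTensor V σ ∘ₗ
          (TensorProduct.assoc R V V V).toLinearMap) := by
        rw [hG1]; simp only [LinearMap.comp_assoc]
    _ = ((TensorProduct.assoc R V V V).symm.toLinearMap ∘ₗ LinearMap.lTensor V σ'' ∘ₗ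
          (TensorProduct.assoc R V V V).toLinearMap) ∘ₗ LinearMap.rTensor V σ'' ∘ₗ
        (((TensorProduct.assoc R V V V).symm.toLinearMap ∘ₗ LinearMap.lTensor V σ'' ∘ₗ
          (TensorProduct.assoc R V V V).toLinearMap) ∘ₗ G) := by
        rw [hG2]; simp only [LinearMap.comp_assoc]
    _ = (((TensorProduct.assoc R V V V).symm.toLinearMap ∘ₗ LinearMap.lTensor V σ'' ∘ₗ
          (TensorProduct.assoc R V V V).toLinearMap) ∘ₗ LinearMap.rTensor V σ'' ∘ₗ
        ((TensorProduct.assoc R V V V).symm.toLinearMap ∘ₗ LinearMap.lTensor V σ'' ∘ₗ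
          (TensorProduct.assoc R V V V).toLinearMap)) ∘ₗ G := by
        simp only [LinearMap.comp_assoc]


private lemma stmt17_part2 (p q : ℕ)
    (hf : (TensorProduct.map f.toLinearMap f.toLinearMap) ∘ₗ σ =
      σ ∘ₗ (TensorProduct.map f.toLinearMap f.toLinearMap)) :
    Function.Bijective
      (TensorProduct.map
          (PiTensorProduct.map fun j : Fin p => (f ^ (-(2 * (j : ℤ)))).toLinearMap)
          (TensorProduct.map
            (TensorProduct.map (f ^ (-(2 * (p : ℤ)))).toLinearMap
              (f ^ (-(2 * ((p : ℤ) + 1)))).toLinearMap)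
            (PiTensorProduct.map fun j : Fin q =>
              (f ^ (-(2 * ((p : ℤ) + 2 + (j : ℤ))))).toLinearMap)) :
        ((⨂[R]^p V) ⊗[R] ((V ⊗[R] V) ⊗[R] (⨂[R]^q V))) →ₗ[R]
          ((⨂[R]^p V) ⊗[R] ((V ⊗[R] V) ⊗[R] (⨂[R]^q V)))) ∧
    (TensorProduct.map
          (PiTensorProduct.map fun j : Fin p => (f ^ (-(2 * (j : ℤ)))).toLinearMap)
          (TensorProduct.map
            (TensorProduct.map (f ^ (-(2 * (p : ℤ)))).toLinearMap
              (f ^ (-(2 * ((p : ℤ) + 1)))).toLinearMap)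
            (PiTensorProduct.map fun j : Fin q =>
              (f ^ (-(2 * ((p : ℤ) + 2 + (j : ℤ))))).toLinearMap))) ∘ₗ
        LinearMap.lTensor (⨂[R]^p V) (LinearMap.rTensor (⨂[R]^q V) σ) =
      LinearMap.lTensor (⨂[R]^p V) (LinearMap.rTensor (⨂[R]^q V)
          ((TensorProduct.map f.toLinearMap f.symm.toLinearMap) ∘ₗ σ ∘ₗ
            (TensorProduct.map f.symm.toLinearMap f.toLinearMap))) ∘ₗ
        (TensorProduct.map
          (PiTensorProduct.map fun j : Fin p => (f ^ (-(2 * (j : ℤ)))).toLinearMap)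
          (TensorProduct.map
            (TensorProduct.map (f ^ (-(2 * (p : ℤ)))).toLinearMap
              (f ^ (-(2 * ((p : ℤ) + 1)))).toLinearMap)
            (PiTensorProduct.map fun j : Fin q =>
              (f ^ (-(2 * ((p : ℤ) + 2 + (j : ℤ))))).toLinearMap))) := by
  constructor
  · have h1 : (TensorProduct.map
          (PiTensorProduct.map fun j : Fin p => (f ^ (-(2 * (j : ℤ)))).toLinearMap)
          (TensorProduct.map
            (TensorProduct.map (f ^ (-(2 * (p : ℤ)))).toLinearMap
              (f ^ (-(2 * ((p : ℤ) + 1)))).toLinearMap)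
            (PiTensorProduct.map fun j : Fin q =>
              (f ^ (-(2 * ((p : ℤ) + 2 + (j : ℤ))))).toLinearMap)) :
        ((⨂[R]^p V) ⊗[R] ((V ⊗[R] V) ⊗[R] (⨂[R]^q V))) →ₗ[R]
          ((⨂[R]^p V) ⊗[R] ((V ⊗[R] V) ⊗[R] (⨂[R]^q V)))) ∘ₗ
        (TensorProduct.map
          (PiTensorProduct.map fun j : Fin p => (f ^ (2 * (j : ℤ))).toLinearMap)
          (TensorProduct.map
            (TensorProduct.map (f ^ (2 * (p : ℤ))).toLinearMap
              (f ^ (2 * ((p : ℤ) + 1))).toLinearMap)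
            (PiTensorProduct.map fun j : Fin q =>
              (f ^ (2 * ((p : ℤ) + 2 + (j : ℤ)))).toLinearMap))) = LinearMap.id := by
      rw [← TensorProduct.map_comp, ← TensorProduct.map_comp, ← TensorProduct.map_comp,
        ← PiTensorProduct.map_comp, ← PiTensorProduct.map_comp,
        stmt17_zcomp0 f _ _ (by ring), stmt17_zcomp0 f _ _ (by ring)]
      have e1 : (fun j : Fin p => (f ^ (-(2 * (j : ℤ)))).toLinearMap ∘ₗ
          (f ^ (2 * (j : ℤ))).toLinearMap) = fun _ => (LinearMap.id : V →ₗ[R] V) :=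
        funext fun j => stmt17_zcomp0 f _ _ (by ring)
      have e2 : (fun j : Fin q => (f ^ (-(2 * ((p : ℤ) + 2 + (j : ℤ))))).toLinearMap ∘ₗ
          (f ^ (2 * ((p : ℤ) + 2 + (j : ℤ)))).toLinearMap) =
            fun _ => (LinearMap.id : V →ₗ[R] V) :=
        funext fun j => stmt17_zcomp0 f _ _ (by ring)
      rw [e1, e2, PiTensorProduct.map_id, PiTensorProduct.map_id, TensorProduct.map_id,
        TensorProduct.map_id, TensorProduct.map_id]
    have h2 : (TensorProduct.map
          (PiTensorProduct.map fun j : Fin p => (f ^ (2 * (j : ℤ))).toLinearMap)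
          (TensorProduct.map
            (TensorProduct.map (f ^ (2 * (p : ℤ))).toLinearMap
              (f ^ (2 * ((p : ℤ) + 1))).toLinearMap)
            (PiTensorProduct.map fun j : Fin q =>
              (f ^ (2 * ((p : ℤ) + 2 + (j : ℤ)))).toLinearMap)) :
        ((⨂[R]^p V) ⊗[R] ((V ⊗[R] V) ⊗[R] (⨂[R]^q V))) →ₗ[R]
          ((⨂[R]^p V) ⊗[R] ((V ⊗[R] V) ⊗[R] (⨂[R]^q V)))) ∘ₗ
        (TensorProduct.map
          (PiTensorProduct.map fun j : Fin p => (f ^ (-(2 * (j : ℤ)))).toLinearMap)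
          (TensorProduct.map
            (TensorProduct.map (f ^ (-(2 * (p : ℤ)))).toLinearMap
              (f ^ (-(2 * ((p : ℤ) + 1)))).toLinearMap)
            (PiTensorProduct.map fun j : Fin q =>
              (f ^ (-(2 * ((p : ℤ) + 2 + (j : ℤ))))).toLinearMap))) = LinearMap.id := by
      rw [← TensorProduct.map_comp, ← TensorProduct.map_comp, ← TensorProduct.map_comp,
        ← PiTensorProduct.map_comp, ← PiTensorProduct.map_comp,
        stmt17_zcomp0 f _ _ (by ring), stmt17_zcomp0 f _ _ (by ring)]
      have e1 : (fun j : Fin p => (f ^ (2 * (j : ℤ))).toLinearMap ∘ₗ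
          (f ^ (-(2 * (j : ℤ)))).toLinearMap) = fun _ => (LinearMap.id : V →ₗ[R] V) :=
        funext fun j => stmt17_zcomp0 f _ _ (by ring)
      have e2 : (fun j : Fin q => (f ^ (2 * ((p : ℤ) + 2 + (j : ℤ)))).toLinearMap ∘ₗ
          (f ^ (-(2 * ((p : ℤ) + 2 + (j : ℤ))))).toLinearMap) =
            fun _ => (LinearMap.id : V →ₗ[R] V) :=
        funext fun j => stmt17_zcomp0 f _ _ (by ring)
      rw [e1, e2, PiTensorProduct.map_id, PiTensorProduct.map_id, TensorProduct.map_id,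
        TensorProduct.map_id, TensorProduct.map_id]
    exact stmt17_bij (M := (⨂[R]^p V) ⊗[R] ((V ⊗[R] V) ⊗[R] (⨂[R]^q V)))
      (N := (⨂[R]^p V) ⊗[R] ((V ⊗[R] V) ⊗[R] (⨂[R]^q V))) _ _ h1 h2
  · show _ ∘ₗ TensorProduct.map LinearMap.id (TensorProduct.map σ LinearMap.id) =
      TensorProduct.map LinearMap.id (TensorProduct.map _ LinearMap.id) ∘ₗ _
    rw [← TensorProduct.map_comp, ← TensorProduct.map_comp, ← TensorProduct.map_comp,
      ← TensorProduct.map_comp]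
    rw [LinearMap.id_comp, LinearMap.comp_id, LinearMap.id_comp, LinearMap.comp_id,
      stmt17_key σ f hf (-(2 * (p : ℤ))) (-(2 * ((p : ℤ) + 1))) (by ring)]


end Stmt17Helpers

/-- Let `σ` be a Yang–Baxter operator on an `R`-module `V` and `f` a linear
automorphism of `V` commuting with `σ` (i.e. `(f ⊗ f) ∘ σ = σ ∘ (f ⊗ f)`). Then
(1) `σ'' = (f ⊗ f⁻¹) ∘ σ ∘ (f⁻¹ ⊗ f)` also satisfies the Yang–Baxter equation, and
(2) for every `n = p + q + 2 ≥ 2` and every position `i = p + 1` (`1 ≤ i ≤ n−1`), the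
automorphism `F = f^0 ⊗ f^{−2} ⊗ ⋯ ⊗ f^{−2(n−1)}` of
`V^{⊗n} = (V^{⊗p}) ⊗ ((V ⊗ V) ⊗ V^{⊗q})` is bijective and intertwines the braid
operators: `F ∘ σ_i = σ''_i ∘ F`. -/
theorem stmt17 {R : Type*} [CommRing R] {V : Type*} [AddCommGroup V] [Module R V]
    (σ : V ⊗[R] V →ₗ[R] V ⊗[R] V)
    (hYB :
      (LinearMap.rTensor V σ) ∘ₗ
          ((TensorProduct.assoc R V V V).symm.toLinearMap ∘ₗ LinearMap.lTensor V σ ∘ₗ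
            (TensorProduct.assoc R V V V).toLinearMap) ∘ₗ (LinearMap.rTensor V σ) =
        ((TensorProduct.assoc R V V V).symm.toLinearMap ∘ₗ LinearMap.lTensor V σ ∘ₗ
            (TensorProduct.assoc R V V V).toLinearMap) ∘ₗ (LinearMap.rTensor V σ) ∘ₗ
          ((TensorProduct.assoc R V V V).symm.toLinearMap ∘ₗ LinearMap.lTensor V σ ∘ₗ
            (TensorProduct.assoc R V V V).toLinearMap))
    (f : V ≃ₗ[R] V)
    (hf : (TensorProduct.map f.toLinearMap f.toLinearMap) ∘ₗ σ =
      σ ∘ₗ (TensorProduct.map f.toLinearMap f.toLinearMap)) :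
    (let σ'' : V ⊗[R] V →ₗ[R] V ⊗[R] V :=
      (TensorProduct.map f.toLinearMap f.symm.toLinearMap) ∘ₗ σ ∘ₗ
        (TensorProduct.map f.symm.toLinearMap f.toLinearMap)
     (LinearMap.rTensor V σ'') ∘ₗ
        ((TensorProduct.assoc R V V V).symm.toLinearMap ∘ₗ LinearMap.lTensor V σ'' ∘ₗ
          (TensorProduct.assoc R V V V).toLinearMap) ∘ₗ (LinearMap.rTensor V σ'') =
      ((TensorProduct.assoc R V V V).symm.toLinearMap ∘ₗ LinearMap.lTensor V σ'' ∘ₗ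
          (TensorProduct.assoc R V V V).toLinearMap) ∘ₗ (LinearMap.rTensor V σ'') ∘ₗ
        ((TensorProduct.assoc R V V V).symm.toLinearMap ∘ₗ LinearMap.lTensor V σ'' ∘ₗ
          (TensorProduct.assoc R V V V).toLinearMap)) ∧
    (∀ p q : ℕ,
      let σ'' : V ⊗[R] V →ₗ[R] V ⊗[R] V :=
        (TensorProduct.map f.toLinearMap f.symm.toLinearMap) ∘ₗ σ ∘ₗ
          (TensorProduct.map f.symm.toLinearMap f.toLinearMap)
      -- `F = f^0 ⊗ f^{−2} ⊗ ⋯ ⊗ f^{−2(n−1)}`, on `V^{⊗n}` grouped as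
      -- `(V^{⊗p}) ⊗ ((V ⊗ V) ⊗ (V^{⊗q}))`, so that positions `i = p+1, i+1 = p+2`
      -- carry `f^{−2p}` and `f^{−2(p+1)}`:
      let F : ((⨂[R]^p V) ⊗[R] ((V ⊗[R] V) ⊗[R] (⨂[R]^q V))) →ₗ[R]
          ((⨂[R]^p V) ⊗[R] ((V ⊗[R] V) ⊗[R] (⨂[R]^q V))) :=
        TensorProduct.map
          (PiTensorProduct.map fun j : Fin p => (f ^ (-(2 * (j : ℤ)))).toLinearMap)
          (TensorProduct.map
            (TensorProduct.map (f ^ (-(2 * (p : ℤ)))).toLinearMap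
              (f ^ (-(2 * ((p : ℤ) + 1)))).toLinearMap)
            (PiTensorProduct.map fun j : Fin q =>
              (f ^ (-(2 * ((p : ℤ) + 2 + (j : ℤ))))).toLinearMap))
      Function.Bijective F ∧
        F ∘ₗ LinearMap.lTensor (⨂[R]^p V) (LinearMap.rTensor (⨂[R]^q V) σ) =
          LinearMap.lTensor (⨂[R]^p V) (LinearMap.rTensor (⨂[R]^q V) σ'') ∘ₗ F) := by
  refine ⟨stmt17_part1 σ f hYB hf, fun p q => stmt17_part2 σ f p q hf⟩
end
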